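/- arXiv:0909.0588 — 3 statements merged into one kernel-verified Lean document; each statement's English description precedes it below -/
import Mathlib

section
/- Let F be a finite field, n a positive integer, C an F-linear subspace of F^n, S a set of coordinate positions in {1,…,n}, and t a nonnegative integer. Then the following two conditions are equivalent: (i) every codeword c ∈ C of Hamming weight at most 2t satisfies c_i = 0 for every position i ∈ S; (ii) for every vector v ∈ F^n and all codewords c, c' ∈ C with d(v,c) ≤ t and d(v,c') ≤ t, one has c_i = c'_i for every position i ∈ S (i.e., up to t errors can be corrected up to an admissible decoding error, where decoding errors are admissible exactly on the positions outside S). -/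
/-- For a linear code `C ⊆ F^n` over a finite field `F`, a set `S` of
positions and `t : ℕ`, the following are equivalent:
(i) every codeword of Hamming weight at most `2t` vanishes on all positions of `S`;
(ii) any two codewords within Hamming distance `t` of a common vector `v` agree on `S`. -/
theorem receding_horizon_admissible_errors
    (F : Type*) [Field F] [Fintype F] [DecidableEq F]
    (n : ℕ) (hn : 0 < n) (C : Submodule F (Fin n → F)) (S : Set (Fin n)) (t : ℕ) :
    (∀ c ∈ C, hammingNorm c ≤ 2 * t → ∀ i ∈ S, c i = 0) ↔
    (∀ v : Fin n → F, ∀ c ∈ C, ∀ c' ∈ C,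
        hammingDist v c ≤ t → hammingDist v c' ≤ t → ∀ i ∈ S, c i = c' i) := by
  constructor
  · intro h v c hc c' hc' hd hd' i hi
    have hsub : c - c' ∈ C := C.sub_mem hc hc'
    have hnorm : hammingNorm (c - c') ≤ 2 * t := by
      calc hammingNorm (c - c') = hammingDist c c' := by simp [hammingNorm, hammingDist, sub_eq_zero]
        _ ≤ hammingDist c v + hammingDist v c' := hammingDist_triangle c v c'
        _ = hammingDist v c + hammingDist v c' := by rw [hammingDist_comm]
        _ ≤ t + t := Nat.add_le_add hd hd'
        _ = 2 * t := (two_mul t).symm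
    have := h _ hsub hnorm i hi
    have : c i - c' i = 0 := this
    linear_combination this
  · intro h c hc hw i hi
    classical
    -- support of c
    set s : Finset (Fin n) := Finset.univ.filter (fun j => c j ≠ 0) with hs
    have hscard : s.card = hammingNorm c := rfl
    -- Choose A ⊆ s with card = s.card - t (0 if s.card ≤ t)
    obtain ⟨A, hAs, hAcard⟩ := Finset.exists_subset_card_eq (s := s) (Nat.sub_le s.card t)
    set v : Fin n → F := fun j => if j ∈ A then c j else 0 with hv
    have hd1 : hammingDist v c ≤ t := by
      have : ∀ j, v j ≠ c j → j ∈ s \ A := by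
        intro j hj
        by_cases hjA : j ∈ A
        · exact absurd (by simp [hv, hjA]) hj
        · refine Finset.mem_sdiff.mpr ⟨?_, hjA⟩
          simp only [hs, Finset.mem_filter, Finset.mem_univ, true_and]
          intro h0
          exact hj (by simp [hv, hjA, h0])
      calc hammingDist v c ≤ (s \ A).card := Finset.card_le_card (fun j hj => by
              exact this j (by simpa [hammingDist] using (Finset.mem_filter.mp hj).2))
        _ = s.card - A.card := Finset.card_sdiff_of_subset hAs
        _ = s.card - (s.card - t) := by rw [hAcard]
        _ ≤ t := by omega
    have hd0 : hammingDist v 0 ≤ t := by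
      have : ∀ j, v j ≠ 0 → j ∈ A := by
        intro j hj
        by_cases hjA : j ∈ A
        · exact hjA
        · exact absurd (by simp [hv, hjA]) hj
      have hcard : hammingDist v 0 ≤ A.card := Finset.card_le_card (fun j hj => by
        exact this j (by simpa [hammingDist] using (Finset.mem_filter.mp hj).2))
      have : A.card ≤ t := by rw [hAcard, hscard]; omega
      omega
    have := h v c hc 0 C.zero_mem hd1 hd0 i hi
    simpa using this
end

section
/- Let F be a finite field, n a positive integer, C an F-linear subspace of F^n, S a set of coordinate positions in {1,…,n}, and t a nonnegative integer. Assume that every codeword c ∈ C of Hamming weight at most 2t satisfies c_i = 0 for every i ∈ S. Then for every codeword c ∈ C and every error vector e ∈ F^n with Hamming weight w(e) ≤ t, every codeword c' ∈ C that minimizes the Hamming distance to c + e over C (i.e., d(c+e, c') ≤ d(c+e, x) for all x ∈ C) agrees with c on all positions of S: c'_i = c_i for every i ∈ S. -/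
/-- If every codeword of `C` of Hamming weight at most `2t` vanishes on all
positions of `S`, then for any codeword `c`, any error `e` of weight at most `t`, and any
codeword `c'` minimizing the Hamming distance to `c + e` over `C`, `c'` agrees with `c`
on all positions of `S`. -/
theorem receding_horizon_corollary
    (F : Type*) [Field F] [Fintype F] [DecidableEq F]
    (n : ℕ) (hn : 0 < n) (C : Submodule F (Fin n → F)) (S : Set (Fin n)) (t : ℕ)
    (hC : ∀ c ∈ C, hammingNorm c ≤ 2 * t → ∀ i ∈ S, c i = 0) :
    ∀ c ∈ C, ∀ e : Fin n → F, hammingNorm e ≤ t →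
      ∀ c' ∈ C, (∀ x ∈ C, hammingDist (c + e) c' ≤ hammingDist (c + e) x) →
        ∀ i ∈ S, c' i = c i := by
  intro c hc e he c' hc' hmin i hi
  have h1 : hammingDist (c + e) c' ≤ t := by
    have := hmin c hc
    have h2 : hammingDist (c + e) c = hammingNorm e := by
      rw [hammingDist_comm, hammingDist_eq_hammingNorm]; congr 1; abel
    omega
  have h3 : hammingNorm (c' - c) ≤ 2 * t := by
    have htri : hammingDist c' c ≤ hammingDist c' (c + e) + hammingDist (c + e) c :=
      hammingDist_triangle _ _ _
    rw [hammingDist_comm c' (c + e)] at htri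
    have h2 : hammingDist (c + e) c = hammingNorm e := by
      rw [hammingDist_comm, hammingDist_eq_hammingNorm]; congr 1; abel
    rw [show c' - c = -c + c' by abel, ← hammingDist_eq_hammingNorm, hammingDist_comm]
    omega
  have h4 := hC (c' - c) (C.sub_mem hc' hc) h3 i hi
  have : c' i - c i = 0 := h4
  linear_combination this
end

section
/- Let q, n, k, t, M be natural numbers with q ≥ 2, k ≤ n, t ≤ k, and M ≥ 2. For a natural number m, write E_{m,t} for the sum over i from 0 to t of (m choose i)·(q−1)^i, and set δ := E_{n,t} / q^{n−k} (a rational number). Then, as rational numbers, [ Σ_{α=0}^{t} (k choose α)(q−1)^α · ( Σ_{β=0}^{t−α} ((n−k choose β)(q−1)^β)^M ) / ( Σ_{s=0}^{t−α} (n−k choose s)(q−1)^s ) ] / ( q^{(M−1)(n−k)} · E_{k,t} ) ≤ δ^{M−1} / E_{k,t}. -/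
/-- `E q t m = ∑_{i=0}^{t} (m choose i)(q-1)^i`, as a rational number. -/
def codeBallSum (q t m : ℕ) : ℚ :=
  ∑ i ∈ Finset.range (t + 1), (m.choose i : ℚ) * ((q - 1 : ℕ) : ℚ) ^ i

private lemma sum_pow_le_pow_sum' {ι : Type*} (s : Finset ι) (f : ι → ℚ)
    (hf : ∀ i ∈ s, 0 ≤ f i) {M : ℕ} (hM : M ≠ 0) :
    ∑ i ∈ s, (f i) ^ M ≤ (∑ i ∈ s, f i) ^ M := by
  induction s using Finset.cons_induction with
  | empty => simp [zero_pow hM]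
  | cons a s ha ih =>
    rw [Finset.sum_cons, Finset.sum_cons]
    calc f a ^ M + ∑ i ∈ s, f i ^ M
        ≤ f a ^ M + (∑ i ∈ s, f i) ^ M := by
          gcongr
          exact ih fun i hi => hf i (Finset.mem_cons_of_mem hi)
      _ ≤ (f a + ∑ i ∈ s, f i) ^ M :=
          pow_add_pow_le (hf a (Finset.mem_cons_self a s))
            (Finset.sum_nonneg fun i hi => hf i (Finset.mem_cons_of_mem hi)) hM

private lemma vandermonde_sum (q n k t : ℕ) (hk : k ≤ n) :
    ∑ α ∈ Finset.range (t + 1), (k.choose α : ℚ) * ((q - 1 : ℕ) : ℚ) ^ α *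
      ∑ β ∈ Finset.range (t - α + 1), ((n - k).choose β : ℚ) * ((q - 1 : ℕ) : ℚ) ^ β
    = codeBallSum q t n := by
  set c : ℚ := ((q - 1 : ℕ) : ℚ) with hc
  have key : ∀ i, (n.choose i : ℚ) * c ^ i
      = ∑ j ∈ Finset.range (i + 1),
          (k.choose j : ℚ) * c ^ j * (((n - k).choose (i - j) : ℚ) * c ^ (i - j)) := by
    intro i
    have hn : k + (n - k) = n := Nat.add_sub_cancel' hk
    have hv : (n.choose i : ℚ) = ∑ j ∈ Finset.range (i + 1),
        (k.choose j : ℚ) * ((n - k).choose (i - j) : ℚ) := by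
      rw [← hn, Nat.add_choose_eq, Finset.Nat.sum_antidiagonal_eq_sum_range_succ_mk]
      push_cast
      simp [Nat.add_sub_cancel_left]
    rw [hv, Finset.sum_mul]
    refine Finset.sum_congr rfl fun j hj => ?_
    have hji : j ≤ i := Nat.lt_succ_iff.mp (Finset.mem_range.mp hj)
    rw [show c ^ i = c ^ j * c ^ (i - j) by rw [← pow_add, Nat.add_sub_cancel' hji]]
    ring
  unfold codeBallSum
  rw [show ((q - 1 : ℕ) : ℚ) = c from rfl]
  simp_rw [key, Finset.mul_sum]
  -- now both sides are double sums; reindex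
  rw [Finset.sum_sigma', Finset.sum_sigma']
  apply Finset.sum_nbij' (fun p => ⟨p.1 + p.2, p.1⟩) (fun p => ⟨p.2, p.1 - p.2⟩)
  · rintro ⟨a, b⟩ h
    simp only [Finset.mem_sigma, Finset.mem_range, Nat.lt_succ_iff] at h ⊢
    omega
  · rintro ⟨i, j⟩ h
    simp only [Finset.mem_sigma, Finset.mem_range, Nat.lt_succ_iff] at h ⊢
    omega
  · rintro ⟨a, b⟩ h
    simp
  · rintro ⟨i, j⟩ h
    simp only [Finset.mem_sigma, Finset.mem_range, Nat.lt_succ_iff] at h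
    simp only [Sigma.mk.inj_iff]
    exact ⟨by omega, by simp⟩
  · rintro ⟨a, b⟩ h
    simp

/-- the counting core of the bound on the probability of `M` different
optimal solutions sharing the same last input vector: with `E_{m,t}` as above and
`δ = E_{n,t}/q^{n-k}`,
`[ Σ_α (k choose α)(q-1)^α (Σ_β ((n-k choose β)(q-1)^β)^M)/(Σ_s (n-k choose s)(q-1)^s) ]
  / (q^{(M-1)(n-k)} E_{k,t}) ≤ δ^{M-1} / E_{k,t}`. -/
theorem multiple_solutions_prob_bound
    (q n k t M : ℕ) (hq : 2 ≤ q) (hk : k ≤ n) (ht : t ≤ k) (hM : 2 ≤ M) :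
    (∑ α ∈ Finset.range (t + 1),
        (k.choose α : ℚ) * ((q - 1 : ℕ) : ℚ) ^ α *
          (∑ β ∈ Finset.range (t - α + 1),
              (((n - k).choose β : ℚ) * ((q - 1 : ℕ) : ℚ) ^ β) ^ M) /
          (∑ s ∈ Finset.range (t - α + 1),
              ((n - k).choose s : ℚ) * ((q - 1 : ℕ) : ℚ) ^ s)) /
        ((q : ℚ) ^ ((M - 1) * (n - k)) * codeBallSum q t k) ≤
      (codeBallSum q t n / (q : ℚ) ^ (n - k)) ^ (M - 1) / codeBallSum q t k := by
  have hc0 : (0 : ℚ) ≤ ((q - 1 : ℕ) : ℚ) := Nat.cast_nonneg _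
  set c : ℚ := ((q - 1 : ℕ) : ℚ) with hc
  set D : ℚ := codeBallSum q t (n - k) with hD
  set En : ℚ := codeBallSum q t n with hEn
  have hb : ∀ m s : ℕ, (0 : ℚ) ≤ (m.choose s : ℚ) * c ^ s := fun m s => by positivity
  have hone : ∀ m u : ℕ, (1 : ℚ) ≤ ∑ s ∈ Finset.range (u + 1), (m.choose s : ℚ) * c ^ s := by
    intro m u
    have h0 : (0:ℕ) ∈ Finset.range (u + 1) := Finset.mem_range.mpr (Nat.succ_pos u)
    have := Finset.single_le_sum (f := fun s => (m.choose s : ℚ) * c ^ s)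
      (fun i _ => hb m i) h0
    simpa using this
  have hSpos : ∀ α, (0:ℚ) < ∑ s ∈ Finset.range (t - α + 1), ((n - k).choose s : ℚ) * c ^ s :=
    fun α => lt_of_lt_of_le one_pos (hone (n - k) (t - α))
  have hSD : ∀ α, (∑ s ∈ Finset.range (t - α + 1), ((n - k).choose s : ℚ) * c ^ s) ≤ D := by
    intro α
    apply Finset.sum_le_sum_of_subset_of_nonneg
    · exact Finset.range_subset_range.mpr (by omega)
    · exact fun i _ _ => hb _ i
  have hDEn : D ≤ En := by
    apply Finset.sum_le_sum
    intro i _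
    have : (n - k).choose i ≤ n.choose i := Nat.choose_le_choose i (Nat.sub_le n k)
    exact mul_le_mul_of_nonneg_right (by exact_mod_cast this) (by positivity)
  have hD0 : (0:ℚ) ≤ D := le_trans zero_le_one (hone (n - k) t)
  have hEn1 : (1:ℚ) ≤ En := hone n t
  have hEn0 : (0:ℚ) ≤ En := le_trans zero_le_one hEn1
  have hM0 : M ≠ 0 := by omega
  -- numerator bound
  have hnum : (∑ α ∈ Finset.range (t + 1),
      (k.choose α : ℚ) * c ^ α *
        (∑ β ∈ Finset.range (t - α + 1), (((n - k).choose β : ℚ) * c ^ β) ^ M) /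
        (∑ s ∈ Finset.range (t - α + 1), ((n - k).choose s : ℚ) * c ^ s)) ≤ En ^ (M - 1) := by
    have step1 : ∀ α ∈ Finset.range (t + 1),
        (k.choose α : ℚ) * c ^ α *
          (∑ β ∈ Finset.range (t - α + 1), (((n - k).choose β : ℚ) * c ^ β) ^ M) /
          (∑ s ∈ Finset.range (t - α + 1), ((n - k).choose s : ℚ) * c ^ s)
        ≤ (k.choose α : ℚ) * c ^ α *
            (∑ s ∈ Finset.range (t - α + 1), ((n - k).choose s : ℚ) * c ^ s) * D ^ (M - 2) := by
      intro α _
      set S : ℚ := ∑ s ∈ Finset.range (t - α + 1), ((n - k).choose s : ℚ) * c ^ s with hS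
      have hSp := hSpos α
      have hS0 : (0:ℚ) ≤ S := le_of_lt hSp
      have ha0 : (0:ℚ) ≤ (k.choose α : ℚ) * c ^ α := hb k α
      rw [div_le_iff₀ hSp]
      have hX : (∑ β ∈ Finset.range (t - α + 1), (((n - k).choose β : ℚ) * c ^ β) ^ M)
          ≤ S ^ M := sum_pow_le_pow_sum' _ _ (fun i _ => hb _ i) hM0
      have hpow : S ^ M = S ^ (M - 2) * S * S := by
        conv_lhs => rw [show M = (M - 2) + 1 + 1 by omega]
        rw [pow_succ, pow_succ]
      calc (k.choose α : ℚ) * c ^ α *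
            (∑ β ∈ Finset.range (t - α + 1), (((n - k).choose β : ℚ) * c ^ β) ^ M)
          ≤ (k.choose α : ℚ) * c ^ α * (S ^ (M - 2) * S * S) := by
            rw [← hpow]; exact mul_le_mul_of_nonneg_left hX ha0
        _ ≤ (k.choose α : ℚ) * c ^ α * (D ^ (M - 2) * S * S) := by
            have : S ^ (M - 2) ≤ D ^ (M - 2) := pow_le_pow_left₀ hS0 (hSD α) _
            gcongr
        _ = (k.choose α : ℚ) * c ^ α * S * D ^ (M - 2) * S := by ring
    calc (∑ α ∈ Finset.range (t + 1), _)
        ≤ ∑ α ∈ Finset.range (t + 1),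
            (k.choose α : ℚ) * c ^ α *
              (∑ s ∈ Finset.range (t - α + 1), ((n - k).choose s : ℚ) * c ^ s) * D ^ (M - 2) :=
          Finset.sum_le_sum step1
      _ = (∑ α ∈ Finset.range (t + 1),
            (k.choose α : ℚ) * c ^ α *
              ∑ s ∈ Finset.range (t - α + 1), ((n - k).choose s : ℚ) * c ^ s) * D ^ (M - 2) :=
          (Finset.sum_mul _ _ _).symm
      _ = En * D ^ (M - 2) := by rw [vandermonde_sum q n k t hk]
      _ ≤ En * En ^ (M - 2) := by gcongr
      _ = En ^ (M - 1) := by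
          rw [← pow_succ']
          congr 1
          omega
  -- final assembly
  have hqpos : (0:ℚ) < (q : ℚ) := by exact_mod_cast Nat.lt_of_lt_of_le Nat.zero_lt_two hq
  have hQ : (0:ℚ) < (q : ℚ) ^ ((M - 1) * (n - k)) := pow_pos hqpos _
  have hEk : (0:ℚ) < codeBallSum q t k := lt_of_lt_of_le one_pos (hone k t)
  rw [div_pow, ← pow_mul, div_div, show (n - k) * (M - 1) = (M - 1) * (n - k) from Nat.mul_comm _ _]
  exact (div_le_div_iff_of_pos_right (mul_pos hQ hEk)).mpr hnum
end
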